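/- Let P be a problem. Then P admits preservation of 1 immunity if and only if P admits preservation of ω immunities. -/

import Mathlib

open Classical in
/-- The characteristic function of a set of naturals. -/
noncomputable def chi (A : Set ℕ) : ℕ → ℕ := fun n => if n ∈ A then 1 else 0

/-- The effective join (Turing join) of two sets of naturals:
`X ⊕ Y = {2n : n ∈ X} ∪ {2n+1 : n ∈ Y}`. -/
def setJoin (A B : Set ℕ) : Set ℕ :=
  {n | (∃ m ∈ A, n = 2 * m) ∨ (∃ m ∈ B, n = 2 * m + 1)}

/-- The graph of a function `f : ℕ → ℕ`, coded as a set of naturals. -/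
def funGraph (f : ℕ → ℕ) : Set ℕ := {m | ∃ n, m = Nat.pair n (f n)}

/-- Partial recursiveness relative to an oracle `g : ℕ → ℕ` (oracle computability). -/
inductive RecursiveInFn (g : ℕ → ℕ) : (ℕ →. ℕ) → Prop
  | zero : RecursiveInFn g (pure 0)
  | succ : RecursiveInFn g Nat.succ
  | left : RecursiveInFn g fun n => (Nat.unpair n).1
  | right : RecursiveInFn g fun n => (Nat.unpair n).2
  | oracle : RecursiveInFn g g
  | pair {f h : ℕ →. ℕ} : RecursiveInFn g f → RecursiveInFn g h →
      RecursiveInFn g fun n => Nat.pair <$> f n <*> h n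
  | comp {f h : ℕ →. ℕ} : RecursiveInFn g f → RecursiveInFn g h →
      RecursiveInFn g fun n => h n >>= f
  | prec {f h : ℕ →. ℕ} : RecursiveInFn g f → RecursiveInFn g h →
      RecursiveInFn g (Nat.unpaired fun a n =>
        n.rec (f a) fun y IH => do {let i ← IH; h (Nat.pair a (Nat.pair y i))})
  | rfind {f : ℕ →. ℕ} : RecursiveInFn g f →
      RecursiveInFn g fun a => Nat.rfind fun n => (fun m => m = 0) <$> f (Nat.pair a n)

/-- Turing reducibility between sets of naturals. -/
noncomputable def TuringRed (A B : Set ℕ) : Prop := RecursiveInFn (chi B) (chi A)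

/-- `A` is `Σ⁰₁(Z)` (i.e. `Z`-c.e.): `A` is the domain of a partial `Z`-computable function. -/
noncomputable def SigmaOneIn (Z A : Set ℕ) : Prop :=
  ∃ f : ℕ →. ℕ, RecursiveInFn (chi Z) f ∧ A = f.Dom

/-- `g` dominates `f` if `g n ≥ f n` for every `n`. -/
def Dominates (g f : ℕ → ℕ) : Prop := ∀ n, f n ≤ g n

/-- `f` is `Z`-hyperimmune: no `Z`-computable function dominates `f`. -/
noncomputable def HyperimmuneIn (Z : Set ℕ) (f : ℕ → ℕ) : Prop :=
  ∀ g : ℕ → ℕ, RecursiveInFn (chi Z) g → ¬ Dominates g f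

/-- `A` is `Δ⁰₂(G)`: `A` is limit computable relative to `G`. -/
noncomputable def DeltaTwoIn (G A : Set ℕ) : Prop :=
  ∃ h : ℕ → ℕ, RecursiveInFn (chi G) h ∧ ∀ x, ∃ s₀, ∀ s ≥ s₀, h (Nat.pair x s) = chi A x

/-- `A` is c.e. (`Σ⁰₁`). -/
noncomputable def CESet (A : Set ℕ) : Prop := SigmaOneIn ∅ A

/-- `A` is `Δ⁰₂` (limit computable). -/
noncomputable def DeltaTwo (A : Set ℕ) : Prop := DeltaTwoIn ∅ A

/-- `A` is `Z`-immune: `A` is infinite and contains no infinite `Z`-computable subset. -/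
noncomputable def ImmuneIn (Z A : Set ℕ) : Prop :=
  A.Infinite ∧ ∀ B : Set ℕ, TuringRed B Z → B.Infinite → ¬ B ⊆ A

/-- `A` is `Z`-hyperimmune as a set: its principal function is `Z`-hyperimmune. -/
noncomputable def HyperimmuneSetIn (Z A : Set ℕ) : Prop :=
  A.Infinite ∧ HyperimmuneIn Z (Nat.nth (· ∈ A))

/-- Enumeration reducibility, with finite sets coded by binary representation
(`m ∈ D_u ↔ Nat.testBit u m`). -/
noncomputable def EnumRed (B A : Set ℕ) : Prop :=
  ∃ W : Set ℕ, CESet W ∧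
    ∀ n, n ∈ B ↔ ∃ u, Nat.pair n u ∈ W ∧ ∀ m, Nat.testBit u m = true → m ∈ A

/-- `B` is cototal: `B ≤ₑ ℕ \ B`. -/
noncomputable def Cototal (B : Set ℕ) : Prop := EnumRed B Bᶜ

/-- `X` is semi-computable: there is a computable selector function. -/
noncomputable def SemiComputable (X : Set ℕ) : Prop :=
  ∃ g : ℕ → ℕ, RecursiveInFn (chi ∅) g ∧
    ∀ x y : ℕ, (g (Nat.pair x y) = x ∨ g (Nat.pair x y) = y) ∧
      ((x ∈ X ∨ y ∈ X) → g (Nat.pair x y) ∈ X)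

/-- A problem: a set of instances, and a solution relation between instances and solutions.
Instances and solutions are coded by sets of naturals. -/
structure Problem where
  Inst : Set (Set ℕ)
  Sol : Set ℕ → Set ℕ → Prop

/-- `P` admits preservation of `W`. -/
noncomputable def Preserves (P : Problem) (W : Set (Set ℕ)) : Prop :=
  ∀ Z ∈ W, ∀ X ∈ P.Inst, TuringRed X Z → ∃ Y, P.Sol X Y ∧ setJoin Z Y ∈ W

/-- `P` admits strong preservation of `W`. -/
noncomputable def StronglyPreserves (P : Problem) (W : Set (Set ℕ)) : Prop :=
  ∀ Z ∈ W, ∀ X ∈ P.Inst, ∃ Y, P.Sol X Y ∧ setJoin Z Y ∈ W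

/-- `W` is downward closed under Turing reducibility. -/
noncomputable def DownwardClosed (W : Set (Set ℕ)) : Prop :=
  ∀ X ∈ W, ∀ Y : Set ℕ, TuringRed Y X → Y ∈ W

/-- A Turing ideal: closed under effective join and downward closed under `≤_T`. -/
noncomputable def TuringIdeal (S : Set (Set ℕ)) : Prop :=
  (∀ X ∈ S, ∀ Y ∈ S, setJoin X Y ∈ S) ∧ DownwardClosed S

/-- `P` holds in `S`: every instance of `P` in `S` has a solution in `S`. -/
def HoldsIn (P : Problem) (S : Set (Set ℕ)) : Prop :=
  ∀ X ∈ P.Inst, X ∈ S → ∃ Y, P.Sol X Y ∧ Y ∈ S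

/-- `P` admits avoidance of `k` cones (`k ≤ ω`, with `ω` represented by `⊤ : ℕ∞`). -/
noncomputable def AvoidsCones (P : Problem) (k : ℕ∞) : Prop :=
  ∀ Z : Set ℕ, ∀ B : ℕ → Set ℕ, (∀ s : ℕ, (s : ℕ∞) < k → ¬ TuringRed (B s) Z) →
    ∀ X ∈ P.Inst, TuringRed X Z →
      ∃ Y, P.Sol X Y ∧ ∀ s : ℕ, (s : ℕ∞) < k → ¬ TuringRed (B s) (setJoin Z Y)

/-- `P` admits non-relativized avoidance of `k` cones. -/
noncomputable def NRAvoidsCones (P : Problem) (k : ℕ∞) : Prop :=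
  ∀ B : ℕ → Set ℕ, (∀ s : ℕ, (s : ℕ∞) < k → ¬ TuringRed (B s) ∅) →
    ∀ X ∈ P.Inst, TuringRed X ∅ →
      ∃ Y, P.Sol X Y ∧ ∀ s : ℕ, (s : ℕ∞) < k → ¬ TuringRed (B s) Y

/-- `P` admits preservation of `k` non-`Σ⁰₁` definitions. -/
noncomputable def PreservesNonSigmaOne (P : Problem) (k : ℕ∞) : Prop :=
  ∀ Z : Set ℕ, ∀ B : ℕ → Set ℕ, (∀ s : ℕ, (s : ℕ∞) < k → ¬ SigmaOneIn Z (B s)) →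
    ∀ X ∈ P.Inst, TuringRed X Z →
      ∃ Y, P.Sol X Y ∧ ∀ s : ℕ, (s : ℕ∞) < k → ¬ SigmaOneIn (setJoin Z Y) (B s)

/-- `P` admits preservation of `k` hyperimmunities. -/
noncomputable def PreservesHyperimmunities (P : Problem) (k : ℕ∞) : Prop :=
  ∀ Z : Set ℕ, ∀ f : ℕ → (ℕ → ℕ), (∀ s : ℕ, (s : ℕ∞) < k → HyperimmuneIn Z (f s)) →
    ∀ X ∈ P.Inst, TuringRed X Z →
      ∃ Y, P.Sol X Y ∧ ∀ s : ℕ, (s : ℕ∞) < k → HyperimmuneIn (setJoin Z Y) (f s)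

/-- `P` admits preservation of `k` immunities. -/
noncomputable def PreservesImmunities (P : Problem) (k : ℕ∞) : Prop :=
  ∀ Z : Set ℕ, ∀ B : ℕ → Set ℕ, (∀ s : ℕ, (s : ℕ∞) < k → ImmuneIn Z (B s)) →
    ∀ X ∈ P.Inst, TuringRed X Z →
      ∃ Y, P.Sol X Y ∧ ∀ s : ℕ, (s : ℕ∞) < k → ImmuneIn (setJoin Z Y) (B s)

/-- Coding a point of Cantor space as a function `ℕ → ℕ`. -/
def boolFun (X : ℕ → Bool) : ℕ → ℕ := fun n => cond (X n) 1 0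

/-- `F` is a trace of the closed set `C ⊆ 2^ω`: each `F n` is a set of binary strings of
length `n`, one of which is a prefix of a member of `C`. -/
def IsTrace (C : Set (ℕ → Bool)) (F : ℕ → Finset (List Bool)) : Prop :=
  ∀ n, (∀ σ ∈ F n, σ.length = n) ∧ ∃ σ ∈ F n, ∃ X ∈ C, σ = (List.range n).map X

/-- `C ⊆ 2^ω` has a `Z`-computable constant-bound trace. -/
noncomputable def HasCBTraceIn (Z : Set ℕ) (C : Set (ℕ → Bool)) : Prop :=
  ∃ (F : ℕ → Finset (List Bool)) (k : ℕ), IsTrace C F ∧ (∀ n, (F n).card = k) ∧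
    RecursiveInFn (chi Z) (fun n => Encodable.encode (F n) : ℕ → ℕ)

open Classical in
/-- The real `0.B` with binary expansion given by `B`. -/
noncomputable def realOf (B : Set ℕ) : ℝ :=
  ∑' n : ℕ, if n ∈ B then ((2 : ℝ) ^ (n + 1))⁻¹ else 0

/-- A c.e. set of rationals: the image of a c.e. set of naturals under the
canonical enumeration of `ℚ`. -/
noncomputable def CERatSet (W : Set ℚ) : Prop :=
  ∃ S : Set ℕ, CESet S ∧ W = (fun n => Denumerable.ofNat ℚ n) '' S


/-! ### Auxiliary machinery for `stmt18` -/

theorem Aux18.partrec_recIn {g : ℕ → ℕ} {f : ℕ →. ℕ} (h : Nat.Partrec f) : RecursiveInFn g f := by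
  induction h with
  | zero => exact .zero
  | succ => exact .succ
  | left => exact .left
  | right => exact .right
  | pair _ _ hf hh => exact .pair hf hh
  | comp _ _ hf hh => exact .comp hf hh
  | prec _ _ hf hh => exact .prec hf hh
  | rfind _ hf => exact .rfind hf

theorem Aux18.comput_recIn {g f : ℕ → ℕ} (h : Computable f) : RecursiveInFn g ↑f :=
  Aux18.partrec_recIn (Partrec.nat_iff.mp h)

theorem Aux18.recIn_comp_tot {g : ℕ → ℕ} {f h : ℕ → ℕ} (hf : RecursiveInFn g ↑f)
    (hh : RecursiveInFn g ↑h) {k : ℕ → ℕ} (hk : ∀ n, k n = f (h n)) : RecursiveInFn g ↑k := by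
  have e : (fun n => (h n : Part ℕ) >>= (↑f : ℕ →. ℕ)) = (↑k : ℕ →. ℕ) := by
    funext n; simp [PFun.coe_val, hk]; exact Part.bind_some _ _
  exact e ▸ RecursiveInFn.comp hf hh

theorem Aux18.recIn_pair_tot {g : ℕ → ℕ} {f h : ℕ → ℕ} (hf : RecursiveInFn g ↑f)
    (hh : RecursiveInFn g ↑h) {k : ℕ → ℕ} (hk : ∀ n, k n = Nat.pair (f n) (h n)) :
    RecursiveInFn g ↑k := by
  have e : (fun n => Nat.pair <$> (f n : Part ℕ) <*> (h n : Part ℕ)) = (↑k : ℕ →. ℕ) := by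
    funext n; simp [PFun.coe_val, Seq.seq, hk]
  exact e ▸ RecursiveInFn.pair hf hh

inductive Aux18.OCode
  | zero | succ | left | right | oracle
  | pair : Aux18.OCode → Aux18.OCode → Aux18.OCode
  | comp : Aux18.OCode → Aux18.OCode → Aux18.OCode
  | prec : Aux18.OCode → Aux18.OCode → Aux18.OCode
  | rfind : Aux18.OCode → Aux18.OCode

namespace Aux18

def OCode.enc : OCode → ℕ
  | .zero => 0
  | .succ => 1
  | .left => 2
  | .right => 3
  | .oracle => 4
  | .pair a b => 4 * Nat.pair a.enc b.enc + 5
  | .comp a b => 4 * Nat.pair a.enc b.enc + 6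
  | .prec a b => 4 * Nat.pair a.enc b.enc + 7
  | .rfind a => 4 * a.enc + 8

theorem OCode.enc_injective : Function.Injective OCode.enc := by
  intro a
  induction a with
  | pair a₁ a₂ ih₁ ih₂ =>
    intro b h; cases b <;> simp only [OCode.enc] at h <;> try omega
    rename_i c₁ c₂
    obtain ⟨e1, e2⟩ := Nat.pair_eq_pair.mp
      (show Nat.pair a₁.enc a₂.enc = Nat.pair c₁.enc c₂.enc by omega)
    rw [ih₁ e1, ih₂ e2]
  | comp a₁ a₂ ih₁ ih₂ =>
    intro b h; cases b <;> simp only [OCode.enc] at h <;> try omega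
    rename_i c₁ c₂
    obtain ⟨e1, e2⟩ := Nat.pair_eq_pair.mp
      (show Nat.pair a₁.enc a₂.enc = Nat.pair c₁.enc c₂.enc by omega)
    rw [ih₁ e1, ih₂ e2]
  | prec a₁ a₂ ih₁ ih₂ =>
    intro b h; cases b <;> simp only [OCode.enc] at h <;> try omega
    rename_i c₁ c₂
    obtain ⟨e1, e2⟩ := Nat.pair_eq_pair.mp
      (show Nat.pair a₁.enc a₂.enc = Nat.pair c₁.enc c₂.enc by omega)
    rw [ih₁ e1, ih₂ e2]
  | rfind a₁ ih₁ =>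
    intro b h; cases b <;> simp only [OCode.enc] at h <;> try omega
    rename_i c₁
    rw [ih₁ (show a₁.enc = c₁.enc by omega)]
  | _ => intro b h; cases b <;> simp only [OCode.enc] at h <;> first | rfl | omega

instance : Countable OCode := ⟨OCode.enc, OCode.enc_injective⟩

def evalo (g : ℕ → ℕ) : OCode → ℕ →. ℕ
  | .zero => pure 0
  | .succ => Nat.succ
  | .left => fun n => (Nat.unpair n).1
  | .right => fun n => (Nat.unpair n).2
  | .oracle => g
  | .pair a b => fun n => Nat.pair <$> evalo g a n <*> evalo g b n
  | .comp a b => fun n => evalo g b n >>= evalo g a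
  | .prec a b => Nat.unpaired fun x n =>
      n.rec (evalo g a x) fun y IH => do {let i ← IH; evalo g b (Nat.pair x (Nat.pair y i))}
  | .rfind a => fun x => Nat.rfind fun n => (fun m => m = 0) <$> evalo g a (Nat.pair x n)

theorem exists_code {g : ℕ → ℕ} {f : ℕ →. ℕ} (h : RecursiveInFn g f) :
    ∃ c : OCode, evalo g c = f := by
  induction h with
  | zero => exact ⟨.zero, rfl⟩
  | succ => exact ⟨.succ, rfl⟩
  | left => exact ⟨.left, rfl⟩
  | right => exact ⟨.right, rfl⟩
  | oracle => exact ⟨.oracle, rfl⟩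
  | pair _ _ ih₁ ih₂ =>
    obtain ⟨c₁, rfl⟩ := ih₁; obtain ⟨c₂, rfl⟩ := ih₂; exact ⟨.pair c₁ c₂, rfl⟩
  | comp _ _ ih₁ ih₂ =>
    obtain ⟨c₁, rfl⟩ := ih₁; obtain ⟨c₂, rfl⟩ := ih₂; exact ⟨.comp c₁ c₂, rfl⟩
  | prec _ _ ih₁ ih₂ =>
    obtain ⟨c₁, rfl⟩ := ih₁; obtain ⟨c₂, rfl⟩ := ih₂; exact ⟨.prec c₁ c₂, rfl⟩
  | rfind _ ih₁ =>
    obtain ⟨c₁, rfl⟩ := ih₁; exact ⟨.rfind c₁, rfl⟩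

theorem countable_red (Z : Set ℕ) : {A : Set ℕ | TuringRed A Z}.Countable := by
  refine Set.Countable.mono ?_
    (Set.countable_range (fun c : OCode => {n : ℕ | 1 ∈ evalo (chi Z) c n}))
  intro A hA
  obtain ⟨c, hc⟩ := exists_code hA
  refine ⟨c, ?_⟩
  ext n
  by_cases h : n ∈ A <;> simp [hc, PFun.coe_val, Part.mem_some_iff, chi, h]

theorem red_empty (Z : Set ℕ) : TuringRed ∅ Z := by
  have e : chi (∅ : Set ℕ) = fun _ => 0 := funext fun n => by simp [chi]
  rw [TuringRed, e]
  exact comput_recIn (Computable.const 0)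

theorem red_column {W G : Set ℕ} (hW : TuringRed W G) (s : ℕ) :
    TuringRed {n | Nat.pair s n ∈ W} G := by
  have hp : Computable (fun n => Nat.pair s n) :=
    (Primrec₂.natPair.comp (Primrec.const s) Primrec.id).to_comp
  exact recIn_comp_tot hW (comput_recIn hp) (fun n => by simp [chi, Set.mem_setOf_eq])

theorem red_guard {W G : Set ℕ} (hW : TuringRed W G) (s c : ℕ) :
    TuringRed {m | m.unpair.1 = s ∧ c ≤ m.unpair.2 ∧ m.unpair.2 ∈ W} G := by
  classical
  set q : ℕ → ℕ := fun p =>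
    if p.unpair.1.unpair.1 = s ∧ c ≤ p.unpair.1.unpair.2 then p.unpair.2 else 0 with hq
  have hu : Primrec (fun p : ℕ => p.unpair.1) := Primrec.fst.comp Primrec.unpair
  have hu2 : Primrec (fun p : ℕ => p.unpair.2) := Primrec.snd.comp Primrec.unpair
  have hq1 : Primrec (fun p : ℕ => p.unpair.1.unpair.1) :=
    Primrec.fst.comp (Primrec.unpair.comp hu)
  have hq2 : Primrec (fun p : ℕ => p.unpair.1.unpair.2) :=
    Primrec.snd.comp (Primrec.unpair.comp hu)
  have hqc : Computable q := by
    refine Primrec.to_comp ?_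
    refine Primrec.ite (PrimrecPred.and ?_ ?_) hu2 (Primrec.const 0)
    · exact Primrec.eq.comp hq1 (Primrec.const s)
    · exact Primrec.nat_le.comp (Primrec.const c) hq2
  have hinner : RecursiveInFn (chi G) ↑(fun m : ℕ => Nat.pair m (chi W m.unpair.2)) := by
    refine recIn_pair_tot (comput_recIn Computable.id)
      (recIn_comp_tot hW (comput_recIn hu2.to_comp) (fun m => rfl)) (fun m => rfl)
  refine recIn_comp_tot (comput_recIn hqc) hinner (fun m => ?_)
  by_cases h1 : m.unpair.1 = s <;> by_cases h2 : c ≤ m.unpair.2 <;>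
    by_cases h3 : m.unpair.2 ∈ W <;>
      simp [chi, hq, Nat.unpair_pair, Set.mem_setOf_eq, h1, h2, h3]

theorem big_column (W : Set ℕ) (hWi : W.Infinite)
    (hcol : ∀ s, {n | Nat.pair s n ∈ W}.Finite) (K : ℕ) : ∃ m ∈ W, K ≤ m.unpair.1 := by
  by_contra h
  push_neg at h
  apply hWi
  have hsub : W ⊆ ⋃ s ∈ Finset.range K, (fun n => Nat.pair s n) '' {n | Nat.pair s n ∈ W} := by
    intro m hm
    refine Set.mem_iUnion₂.mpr ⟨m.unpair.1, Finset.mem_range.mpr (h m hm),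
      ⟨m.unpair.2, ?_, Nat.pair_unpair m⟩⟩
    simpa [Nat.pair_unpair] using hm
  exact Set.Finite.subset
    (Set.Finite.biUnion (Finset.range K).finite_toSet (fun s _ => (hcol s).image _)) hsub

theorem pair_fst_injOn (s : ℕ) (T : Set ℕ) : Set.InjOn (fun n => Nat.pair s n) T :=
  Set.injOn_of_injective (fun a b hab => by
    simpa [Nat.unpair_pair] using congrArg (fun x => x.unpair.2) hab)

theorem exists_master (Z : Set ℕ) (B : ℕ → Set ℕ) (hB : ∀ s, ImmuneIn Z (B s)) :
    ∃ C : Set ℕ, ImmuneIn Z C ∧ ∀ G : Set ℕ, ImmuneIn G C → ∀ s, ImmuneIn G (B s) := by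
  classical
  obtain ⟨V, hV⟩ := (countable_red Z).exists_eq_range ⟨∅, red_empty Z⟩
  set Act : ℕ → Prop := fun e =>
    (∀ m ∈ V e, m.unpair.2 ∈ B m.unpair.1) ∧ (∀ s, {n | Nat.pair s n ∈ V e}.Finite) ∧
      (V e).Infinite with hAct
  have hpick : ∀ e, ∃ m, Act e → (m ∈ V e ∧ max e 1 ≤ m.unpair.1) := by
    intro e
    by_cases h : Act e
    · obtain ⟨m, hm, hK⟩ := big_column (V e) h.2.2 h.2.1 (max e 1)
      exact ⟨m, fun _ => ⟨hm, hK⟩⟩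
    · exact ⟨0, fun h' => absurd h' h⟩
  choose p hp using hpick
  set f : ℕ → ℕ := fun s => (Finset.range (s+1)).sup
      (fun e => if Act e ∧ (p e).unpair.1 = s then (p e).unpair.2 + 1 else 0) with hf
  set C : Set ℕ := {m | m.unpair.2 ∈ B m.unpair.1 ∧ f m.unpair.1 ≤ m.unpair.2} with hC
  have hf0 : f 0 = 0 := by
    rw [hf]
    refine Nat.le_zero.mp (Finset.sup_le ?_)
    intro e he
    split_ifs with h
    · exact absurd h.2 (by have := (hp e h.1).2; omega)
    · exact le_rfl
  have hnotC : ∀ e, Act e → p e ∉ C := by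
    intro e hA
    have h1 := (hp e hA).2
    have h3 : (p e).unpair.2 + 1 ≤ f ((p e).unpair.1) := by
      rw [hf]
      have := Finset.le_sup (f := fun e' =>
          if Act e' ∧ (p e').unpair.1 = (p e).unpair.1 then (p e').unpair.2 + 1 else 0)
        (Finset.mem_range.mpr (show e < (p e).unpair.1 + 1 by omega))
      refine le_trans ?_ this
      show (Nat.unpair (p e)).2 + 1 ≤
        if Act e ∧ (Nat.unpair (p e)).1 = (Nat.unpair (p e)).1 then (Nat.unpair (p e)).2 + 1 else 0
      rw [if_pos (⟨hA, rfl⟩ : Act e ∧ (Nat.unpair (p e)).1 = (Nat.unpair (p e)).1)]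
    intro hm
    rw [hC] at hm
    exact absurd hm.2 (by omega)
  have hCinf : C.Infinite := by
    have himg : ((fun n => Nat.pair 0 n) '' (B 0)).Infinite :=
      (hB 0).1.image (pair_fst_injOn 0 _)
    refine himg.mono ?_
    rintro m ⟨n, hn, rfl⟩
    rw [hC]
    refine ⟨by simpa [Nat.unpair_pair] using hn, by simp [Nat.unpair_pair, hf0]⟩
  have hCimm : ImmuneIn Z C := by
    refine ⟨hCinf, ?_⟩
    intro W hWred hWinf hWsub
    have hWmem : W ∈ Set.range V := hV ▸ hWred
    obtain ⟨e, rfl⟩ := hWmem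
    by_cases hcol : ∀ s, {n | Nat.pair s n ∈ V e}.Finite
    · have hA : Act e := ⟨fun m hm => (hWsub hm).1, hcol, hWinf⟩
      exact hnotC e hA (hWsub (hp e hA).1)
    · push_neg at hcol
      obtain ⟨s, hs⟩ := hcol
      have hcolred : TuringRed {n | Nat.pair s n ∈ V e} Z := red_column hWred s
      have hcolsub : {n | Nat.pair s n ∈ V e} ⊆ B s := by
        intro n hn
        have h2 := (hWsub hn).1
        simpa [Nat.unpair_pair] using h2
      exact (hB s).2 _ hcolred hs hcolsub
  refine ⟨C, hCimm, ?_⟩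
  intro G hCG s
  refine ⟨(hB s).1, ?_⟩
  intro W hWred hWinf hWsub
  set W' : Set ℕ := {m | m.unpair.1 = s ∧ f s ≤ m.unpair.2 ∧ m.unpair.2 ∈ W} with hW'
  have h1 : TuringRed W' G := by
    rw [hW']
    exact red_guard hWred s (f s)
  have h2 : W'.Infinite := by
    have himg : ((fun n => Nat.pair s n) '' (W \ {n | n < f s})).Infinite :=
      ((hWinf.diff (Set.finite_lt_nat (f s))).image (pair_fst_injOn s _))
    refine himg.mono ?_
    rintro m ⟨n, ⟨hn, hlt⟩, rfl⟩
    simp only [hW', Set.mem_setOf_eq] at hlt ⊢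
    refine ⟨by simp [Nat.unpair_pair], by simp [Nat.unpair_pair]; omega,
      by simpa [Nat.unpair_pair] using hn⟩
  have h3 : W' ⊆ C := by
    rintro m hm
    rw [hW'] at hm
    obtain ⟨e1, e2, e3⟩ := hm
    rw [hC]
    exact ⟨by rw [e1]; exact hWsub e3, by rw [e1]; exact e2⟩
  exact hCG.2 W' h1 h2 h3

end Aux18


/-- Preservation of 1 immunity is equivalent to preservation of
ω immunities. -/
theorem stmt18 (P : Problem) : PreservesImmunities P 1 ↔ PreservesImmunities P ⊤ := by
  constructor
  · intro H Z B hB X hX hXZ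
    obtain ⟨C, hC, htr⟩ := Aux18.exists_master Z B
      (fun s => hB s (lt_top_iff_ne_top.mpr (by simp)))
    obtain ⟨Y, hY, him⟩ := H Z (fun _ => C) (fun s _ => hC) X hX hXZ
    exact ⟨Y, hY, fun s _ => htr (setJoin Z Y) (him 0 zero_lt_one) s⟩
  · intro H Z B hB X hX hXZ
    obtain ⟨Y, hY, him⟩ := H Z (fun _ => B 0) (fun s _ => hB 0 zero_lt_one) X hX hXZ
    refine ⟨Y, hY, fun s hs => ?_⟩
    have hs0 : s = 0 := by exact_mod_cast Nat.lt_one_iff.mp (by exact_mod_cast hs)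
    rw [hs0]
    exact him 0 (lt_top_iff_ne_top.mpr (by simp))
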